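/- Let $\chi_0 : \mathbb{R}_+ \to \mathcal{B}(X,Y)$ be strongly continuous and uniformly bounded, and $F \in \mathcal{B}(Y,X)$. The solution map $\mathcal{S}_F : \chi_0 \mapsto \chi_F$, where $\chi_F$ is the unique strongly continuous solution of $\chi_F(t) = \chi_0(t) + \int_0^t \chi_0(t-s)F\chi_F(s)ds$, is a bijection on the space of strongly continuous uniformly-bounded-on-compacts $\mathcal{B}(X,Y)$-valued functions on $\mathbb{R}_+$, with inverse given by the solution map $\mathcal{S}_{-F}$ of the Volterra equation with kernel $-F$. -/

import Mathlib

open MeasureTheory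

/-- Membership in the solution space: strongly continuous on `ℝ₊` and uniformly bounded
(in operator norm) on compact subsets of `ℝ₊`. -/
def DysonGood {X Y : Type*} [NormedAddCommGroup X] [NormedSpace ℂ X]
    [NormedAddCommGroup Y] [NormedSpace ℂ Y] (χ : ℝ → X →L[ℂ] Y) : Prop :=
  (∀ x : X, ContinuousOn (fun t => χ t x) (Set.Ici 0)) ∧
    ∀ T : ℝ, ∃ C : ℝ, ∀ t ∈ Set.Icc (0 : ℝ) T, ‖χ t‖ ≤ C

/-- `χF` solves the Dyson (Volterra) equation with data `χ0` and kernel operator `F`. -/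
def DysonSol {X Y : Type*} [NormedAddCommGroup X] [NormedSpace ℂ X]
    [NormedAddCommGroup Y] [NormedSpace ℂ Y] [CompleteSpace Y]
    (F : Y →L[ℂ] X) (χ0 χF : ℝ → X →L[ℂ] Y) : Prop :=
  ∀ t : ℝ, 0 ≤ t → ∀ x : X,
    χF t x = χ0 t x + ∫ s in (0 : ℝ)..t, χ0 (t - s) (F (χF s x))

set_option linter.unusedSectionVars false

section Volterra

variable {X Y : Type*} [NormedAddCommGroup X] [NormedSpace ℂ X]
  [NormedAddCommGroup Y] [NormedSpace ℂ Y]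

theorem joint_cont' {P : Type*} [TopologicalSpace P] (A : ℝ → X →L[ℂ] Y)
    (hA1 : ∀ x, Continuous fun t => A t x)
    (hA2 : ∀ T : ℝ, ∃ C, 0 ≤ C ∧ ∀ t : ℝ, t ≤ T → ‖A t‖ ≤ C)
    {f : P → ℝ} {w : P → X} (hf : Continuous f) (hw : Continuous w) :
    Continuous fun p : P => A (f p) (w p) := by
  rw [continuous_iff_continuousAt]
  intro p₀
  obtain ⟨C, hC0, hC⟩ := hA2 (f p₀ + 1)
  have h1 : Filter.Tendsto (fun p : P => A (f p) (w p - w p₀)) (nhds p₀) (nhds 0) := by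
    apply squeeze_zero_norm'
    · have hev : ∀ᶠ p : P in nhds p₀, f p ≤ f p₀ + 1 := by
        have : Set.Iio (f p₀ + 1) ∈ nhds (f p₀) := Iio_mem_nhds (by linarith)
        exact Filter.Eventually.mono ((hf.tendsto _).eventually_mem this)
          (fun p hp => le_of_lt hp)
      filter_upwards [hev] with p hp
      calc ‖A (f p) (w p - w p₀)‖ ≤ ‖A (f p)‖ * ‖w p - w p₀‖ := (A _).le_opNorm _
        _ ≤ C * ‖w p - w p₀‖ := by
            apply mul_le_mul_of_nonneg_right (hC _ hp) (norm_nonneg _)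
    · have h2 : Filter.Tendsto (fun p : P => w p - w p₀) (nhds p₀) (nhds 0) := by
        have := (hw.tendsto p₀).sub (tendsto_const_nhds (x := w p₀))
        simpa using this
      simpa using (h2.norm.const_mul C)
  have h2 : Filter.Tendsto (fun p : P => A (f p) (w p₀)) (nhds p₀) (nhds (A (f p₀) (w p₀))) :=
    ((hA1 (w p₀)).comp hf).tendsto _
  have key := h1.add h2
  rw [zero_add] at key
  have heq : (fun p : P => A (f p) (w p - w p₀) + A (f p) (w p₀))
      = fun p : P => A (f p) (w p) := by
    funext p; simp [map_sub]
  rw [heq] at key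
  exact key


/-- joint continuity of a strongly continuous, locally bounded operator family applied
to a continuous vector-valued function -/
theorem joint_cont (A : ℝ → X →L[ℂ] Y) (hA1 : ∀ x, Continuous fun t => A t x)
    (hA2 : ∀ T : ℝ, ∃ C, 0 ≤ C ∧ ∀ t : ℝ, t ≤ T → ‖A t‖ ≤ C)
    {v : ℝ → X} (hv : Continuous v) : Continuous fun p : ℝ × ℝ => A p.1 (v p.2) := by
  rw [continuous_iff_continuousAt]
  rintro ⟨t₀, s₀⟩
  obtain ⟨C, hC0, hC⟩ := hA2 (t₀ + 1)
  have h1 : Filter.Tendsto (fun p : ℝ × ℝ => A p.1 (v p.2 - v s₀)) (nhds (t₀, s₀)) (nhds 0) := by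
    apply squeeze_zero_norm'
    · have hev : ∀ᶠ p : ℝ × ℝ in nhds (t₀, s₀), p.1 ≤ t₀ + 1 := by
        have : Set.Iio (t₀ + 1) ∈ nhds t₀ := Iio_mem_nhds (by linarith)
        exact Filter.Eventually.mono ((continuous_fst.tendsto _).eventually_mem this)
          (fun p hp => le_of_lt hp)
      filter_upwards [hev] with p hp
      calc ‖A p.1 (v p.2 - v s₀)‖ ≤ ‖A p.1‖ * ‖v p.2 - v s₀‖ := (A p.1).le_opNorm _
        _ ≤ C * ‖v p.2 - v s₀‖ := by
            apply mul_le_mul_of_nonneg_right (hC _ hp) (norm_nonneg _)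
    · have : Filter.Tendsto (fun p : ℝ × ℝ => v p.2 - v s₀) (nhds (t₀, s₀)) (nhds 0) := by
        have := ((hv.comp continuous_snd).tendsto ((t₀, s₀) : ℝ × ℝ)).sub
          (tendsto_const_nhds (x := v s₀))
        simpa using this
      simpa using (this.norm.const_mul C)
  have h2 : Filter.Tendsto (fun p : ℝ × ℝ => A p.1 (v s₀)) (nhds (t₀, s₀)) (nhds (A t₀ (v s₀))) :=
    ((hA1 (v s₀)).comp continuous_fst).tendsto _
  have key := h1.add h2
  rw [zero_add] at key
  have heq : (fun p : ℝ × ℝ => A p.1 (v p.2 - v s₀) + A p.1 (v s₀))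
      = fun p : ℝ × ℝ => A p.1 (v p.2) := by
    funext p; simp [map_sub]
  rw [heq] at key
  exact key

/-- continuity of the Volterra convolution-type integral -/
theorem conv_cont (A : ℝ → X →L[ℂ] Y) [CompleteSpace Y] (hA1 : ∀ x, Continuous fun t => A t x)
    (hA2 : ∀ T : ℝ, ∃ C, 0 ≤ C ∧ ∀ t : ℝ, t ≤ T → ‖A t‖ ≤ C)
    {v : ℝ → X} (hv : Continuous v) :
    Continuous fun t : ℝ => ∫ s in (0:ℝ)..t, A (t - s) (v s) := by
  apply intervalIntegral.continuous_parametric_intervalIntegral_of_continuous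
    (f := fun t s => A (t - s) (v s)) (μ := volume) _ continuous_id
  have h := joint_cont A hA1 hA2 hv
  exact h.comp (by fun_prop : Continuous fun p : ℝ × ℝ => ((p.1 - p.2 : ℝ), p.2))

end Volterra

section FixedPoint

variable {X Y : Type*} [NormedAddCommGroup X] [NormedSpace ℂ X]
  [NormedAddCommGroup Y] [NormedSpace ℂ Y] [CompleteSpace Y]

/-- The Picard iteration map for the Volterra equation on `C(Icc 0 T, Y)`. -/
noncomputable def PhiC (A : ℝ → X →L[ℂ] Y) (F : Y →L[ℂ] X) (g : ℝ → Y)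
    (T : ℝ) (hT : (0:ℝ) ≤ T)
    (hA1 : ∀ x, Continuous fun t => A t x)
    (hA2 : ∀ T : ℝ, ∃ C, 0 ≤ C ∧ ∀ t : ℝ, t ≤ T → ‖A t‖ ≤ C)
    (hg : Continuous g) (φ : C(Set.Icc (0:ℝ) T, Y)) : C(Set.Icc (0:ℝ) T, Y) :=
  ⟨fun u => g u + ∫ s in (0:ℝ)..(u:ℝ), A ((u:ℝ) - s) (F (φ (Set.projIcc 0 T hT s))), by
    have hw : Continuous fun s : ℝ => F (φ (Set.projIcc 0 T hT s)) :=
      F.continuous.comp (φ.continuous.comp continuous_projIcc)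
    have h : Continuous fun t : ℝ =>
        g t + ∫ s in (0:ℝ)..t, A (t - s) (F (φ (Set.projIcc 0 T hT s))) :=
      hg.add (conv_cont A hA1 hA2 hw)
    exact h.comp continuous_subtype_val⟩

theorem PhiC_apply (A : ℝ → X →L[ℂ] Y) (F : Y →L[ℂ] X) (g : ℝ → Y)
    (T : ℝ) (hT : (0:ℝ) ≤ T) (hA1) (hA2) (hg) (φ : C(Set.Icc (0:ℝ) T, Y))
    (u : Set.Icc (0:ℝ) T) :
    PhiC A F g T hT hA1 hA2 hg φ u
      = g u + ∫ s in (0:ℝ)..(u:ℝ), A ((u:ℝ) - s) (F (φ (Set.projIcc 0 T hT s))) := rfl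

theorem sCont (A : ℝ → X →L[ℂ] Y)
    (hA1 : ∀ x, Continuous fun t => A t x)
    (hA2 : ∀ T : ℝ, ∃ C, 0 ≤ C ∧ ∀ t : ℝ, t ≤ T → ‖A t‖ ≤ C)
    {w : ℝ → X} (hw : Continuous w) (u : ℝ) :
    Continuous fun s : ℝ => A (u - s) (w s) :=
  (joint_cont A hA1 hA2 hw).comp
    ((continuous_const.sub continuous_id).prodMk continuous_id)

theorem PhiC_iter_est (A : ℝ → X →L[ℂ] Y) (F : Y →L[ℂ] X) (g : ℝ → Y)
    (T : ℝ) (hT : (0:ℝ) ≤ T) (hA1) (hA2) (hg)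
    {C : ℝ} (hC0 : 0 ≤ C) (hC : ∀ t : ℝ, t ≤ T → ‖A t‖ ≤ C)
    (φ ψ : C(Set.Icc (0:ℝ) T, Y)) :
    ∀ (n : ℕ) (u : Set.Icc (0:ℝ) T),
      ‖((PhiC A F g T hT hA1 hA2 hg)^[n] φ) u - ((PhiC A F g T hT hA1 hA2 hg)^[n] ψ) u‖
        ≤ dist φ ψ * (C * ‖F‖) ^ n * (u:ℝ) ^ n / (n.factorial : ℝ) := by
  intro n
  induction n with
  | zero =>
      intro u
      simp only [Function.iterate_zero, id_eq, pow_zero, Nat.factorial_zero, Nat.cast_one,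
        mul_one, div_one]
      calc ‖φ u - ψ u‖ = dist (φ u) (ψ u) := (dist_eq_norm _ _).symm
        _ ≤ dist φ ψ := ContinuousMap.dist_apply_le_dist u
  | succ n ih =>
      intro u
      set Φ := PhiC A F g T hT hA1 hA2 hg with hΦdef
      have h0u : (0:ℝ) ≤ (u:ℝ) := u.2.1
      have huT : (u:ℝ) ≤ T := u.2.2
      set a := Φ^[n] φ with ha
      set b := Φ^[n] ψ with hb
      have hinta : Continuous fun s : ℝ => A ((u:ℝ) - s) (F (a (Set.projIcc 0 T hT s))) :=
        sCont A hA1 hA2 (F.continuous.comp (a.continuous.comp continuous_projIcc)) _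
      have hintb : Continuous fun s : ℝ => A ((u:ℝ) - s) (F (b (Set.projIcc 0 T hT s))) :=
        sCont A hA1 hA2 (F.continuous.comp (b.continuous.comp continuous_projIcc)) _
      rw [Function.iterate_succ_apply' Φ n φ, Function.iterate_succ_apply' Φ n ψ, ← ha, ← hb,
        PhiC_apply, PhiC_apply, add_sub_add_left_eq_sub,
        ← intervalIntegral.integral_sub (hinta.intervalIntegrable _ _)
          (hintb.intervalIntegrable _ _)]
      have heq : ∀ s : ℝ,
          A ((u:ℝ) - s) (F (a (Set.projIcc 0 T hT s)))
            - A ((u:ℝ) - s) (F (b (Set.projIcc 0 T hT s)))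
          = A ((u:ℝ) - s) (F (a (Set.projIcc 0 T hT s) - b (Set.projIcc 0 T hT s))) := by
        intro s; rw [map_sub, map_sub]
      simp only [heq]
      have hintc : Continuous fun s : ℝ =>
          A ((u:ℝ) - s) (F (a (Set.projIcc 0 T hT s) - b (Set.projIcc 0 T hT s))) :=
        sCont A hA1 hA2
          (F.continuous.comp ((a.continuous.sub b.continuous).comp continuous_projIcc)) _
      calc ‖∫ s in (0:ℝ)..(u:ℝ),
              A ((u:ℝ) - s) (F (a (Set.projIcc 0 T hT s) - b (Set.projIcc 0 T hT s)))‖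
          ≤ ∫ s in (0:ℝ)..(u:ℝ),
              ‖A ((u:ℝ) - s) (F (a (Set.projIcc 0 T hT s) - b (Set.projIcc 0 T hT s)))‖ :=
            intervalIntegral.norm_integral_le_integral_norm h0u
        _ ≤ ∫ s in (0:ℝ)..(u:ℝ),
              (C * ‖F‖) * (dist φ ψ * (C * ‖F‖) ^ n / (n.factorial : ℝ)) * s ^ n := by
            apply intervalIntegral.integral_mono_on h0u
              (hintc.norm.intervalIntegrable _ _)
              (((continuous_const.mul (continuous_pow n))).intervalIntegrable _ _)
            intro s hs
            have hsmem : s ∈ Set.Icc (0:ℝ) T := ⟨hs.1, hs.2.trans huT⟩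
            have hproj : ((Set.projIcc 0 T hT s : Set.Icc (0:ℝ) T) : ℝ) = s := by
              rw [Set.projIcc_of_mem hT hsmem]
            have hihs := ih (Set.projIcc 0 T hT s)
            rw [hproj] at hihs
            calc ‖A ((u:ℝ) - s) (F (a (Set.projIcc 0 T hT s) - b (Set.projIcc 0 T hT s)))‖
                ≤ ‖A ((u:ℝ) - s)‖ * ‖F (a (Set.projIcc 0 T hT s) - b (Set.projIcc 0 T hT s))‖ :=
                  (A _).le_opNorm _
              _ ≤ C * (‖F‖ * ‖a (Set.projIcc 0 T hT s) - b (Set.projIcc 0 T hT s)‖) := by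
                  apply mul_le_mul (hC _ (by linarith [hs.1])) (F.le_opNorm _)
                    (norm_nonneg _) hC0
              _ ≤ C * (‖F‖ * (dist φ ψ * (C * ‖F‖) ^ n * s ^ n / (n.factorial : ℝ))) := by
                  have := mul_le_mul_of_nonneg_left hihs (norm_nonneg F)
                  exact mul_le_mul_of_nonneg_left this hC0
              _ = (C * ‖F‖) * (dist φ ψ * (C * ‖F‖) ^ n / (n.factorial : ℝ)) * s ^ n := by
                  ring
        _ = dist φ ψ * (C * ‖F‖) ^ (n + 1) * (u:ℝ) ^ (n + 1) / ((n+1).factorial : ℝ) := by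
            rw [intervalIntegral.integral_const_mul, integral_pow]
            have hfac : ((n+1).factorial : ℝ) = ((n:ℝ) + 1) * (n.factorial : ℝ) := by
              rw [Nat.factorial_succ]; push_cast; ring
            rw [hfac]
            have h1 : (n.factorial : ℝ) ≠ 0 := Nat.cast_ne_zero.mpr n.factorial_ne_zero
            have h2 : ((n:ℝ) + 1) ≠ 0 := by positivity
            field_simp
            ring

theorem volterra_T (A : ℝ → X →L[ℂ] Y) (F : Y →L[ℂ] X) (g : ℝ → Y)
    (hA1 : ∀ x, Continuous fun t => A t x)
    (hA2 : ∀ T : ℝ, ∃ C, 0 ≤ C ∧ ∀ t : ℝ, t ≤ T → ‖A t‖ ≤ C)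
    (hg : Continuous g) (T : ℝ) (hT : (0:ℝ) ≤ T) :
    ∃ φ : C(Set.Icc (0:ℝ) T, Y),
      (PhiC A F g T hT hA1 hA2 hg φ = φ) ∧
      (∀ ψ, PhiC A F g T hT hA1 hA2 hg ψ = ψ → ψ = φ) ∧
      (∀ C G : ℝ, (∀ t : ℝ, t ≤ T → ‖A t‖ ≤ C) →
        (∀ t ∈ Set.Icc (0:ℝ) T, ‖g t‖ ≤ G) →
        ∀ u : Set.Icc (0:ℝ) T, ‖φ u‖ ≤ Real.exp (C * ‖F‖ * T) * G) := by
  classical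
  set Φ := PhiC A F g T hT hA1 hA2 hg with hΦdef
  haveI : Nonempty (C(Set.Icc (0:ℝ) T, Y)) := ⟨0⟩
  have hdist : ∀ C : ℝ, 0 ≤ C → (∀ t : ℝ, t ≤ T → ‖A t‖ ≤ C) →
      ∀ (n : ℕ) (φ ψ : C(Set.Icc (0:ℝ) T, Y)),
        dist (Φ^[n] φ) (Φ^[n] ψ) ≤ (C * ‖F‖ * T) ^ n / (n.factorial : ℝ) * dist φ ψ := by
    intro C hC0 hC n φ ψ
    have hb0 : (0:ℝ) ≤ (C * ‖F‖ * T) ^ n / (n.factorial : ℝ) * dist φ ψ := by positivity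
    refine (ContinuousMap.dist_le hb0).2 fun u => ?_
    rw [dist_eq_norm]
    refine (PhiC_iter_est A F g T hT hA1 hA2 hg hC0 hC φ ψ n u).trans ?_
    have h1 : dist φ ψ * (C * ‖F‖) ^ n * (u:ℝ) ^ n / (n.factorial : ℝ)
        ≤ dist φ ψ * (C * ‖F‖) ^ n * T ^ n / (n.factorial : ℝ) := by
      have hpow : (u:ℝ) ^ n ≤ T ^ n := pow_le_pow_left₀ u.2.1 u.2.2 n
      rw [div_eq_mul_inv, div_eq_mul_inv]
      refine mul_le_mul_of_nonneg_right ?_ (by positivity)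
      exact mul_le_mul_of_nonneg_left hpow (by positivity)
    refine h1.trans_eq ?_
    rw [mul_pow (C * ‖F‖) T]
    ring
  obtain ⟨C₀, hC₀0, hC₀⟩ := hA2 T
  have htendsto := FloorSemiring.tendsto_pow_div_factorial_atTop (K := ℝ) (C₀ * ‖F‖ * T)
  have hev : ∀ᶠ n : ℕ in Filter.atTop, (C₀ * ‖F‖ * T) ^ n / (n.factorial : ℝ) < 1 :=
    htendsto.eventually_lt_const one_pos
  obtain ⟨n, hn⟩ := hev.exists
  have hq0 : (0:ℝ) ≤ (C₀ * ‖F‖ * T) ^ n / (n.factorial : ℝ) := by positivity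
  set K : NNReal := ⟨(C₀ * ‖F‖ * T) ^ n / (n.factorial : ℝ), hq0⟩ with hK
  have hc : ContractingWith K (Φ^[n]) := by
    constructor
    · rw [← NNReal.coe_lt_coe]; exact hn
    · apply LipschitzWith.of_dist_le_mul
      intro φ ψ
      exact hdist C₀ hC₀0 hC₀ n φ ψ
  set φ := hc.fixedPoint (Φ^[n]) with hφdef
  have hfixn : Φ^[n] φ = φ := hc.fixedPoint_isFixedPt
  have hfix : Φ φ = φ := by
    have h1 : Φ^[n] (Φ φ) = Φ φ := by
      rw [← Function.iterate_succ_apply, Function.iterate_succ_apply', hfixn]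
    exact hc.fixedPoint_unique h1
  refine ⟨φ, hfix, ?_, ?_⟩
  · intro ψ hψ
    exact hc.fixedPoint_unique ((Function.IsFixedPt.iterate hψ n))
  · intro C G hC hG
    have hC0 : 0 ≤ C := (norm_nonneg (A 0)).trans (hC 0 hT)
    have hG0 : 0 ≤ G := (norm_nonneg (g 0)).trans (hG 0 ⟨le_refl 0, hT⟩)
    set M := C * ‖F‖ * T with hM
    have hM0 : 0 ≤ M := by positivity
    have hΦ0 : dist (Φ 0) 0 ≤ G := by
      refine (ContinuousMap.dist_le hG0).2 fun u => ?_
      have h1 : Φ (0 : C(Set.Icc (0:ℝ) T, Y)) u = g u := by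
        rw [hΦdef, PhiC_apply]
        simp
      rw [h1, ContinuousMap.zero_apply, dist_zero_right]
      exact hG u ⟨u.2.1, u.2.2⟩
    have hsum : ∀ m : ℕ, dist (Φ^[m] 0) 0 ≤ Real.exp M * G := by
      intro m
      have h1 : dist ((0 : C(Set.Icc (0:ℝ) T, Y))) (Φ^[m] 0)
          ≤ ∑ i ∈ Finset.range m, dist (Φ^[i] 0) (Φ^[i+1] 0) := by
        simpa using dist_le_range_sum_dist (fun k => Φ^[k] (0 : C(Set.Icc (0:ℝ) T, Y))) m
      have h2 : ∀ i : ℕ, dist (Φ^[i] (0 : C(Set.Icc (0:ℝ) T, Y))) (Φ^[i+1] 0)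
          ≤ M ^ i / (i.factorial : ℝ) * G := by
        intro i
        have := hdist C hC0 hC i 0 (Φ 0)
        rw [← Function.iterate_succ_apply] at this
        refine this.trans ?_
        have : dist (0 : C(Set.Icc (0:ℝ) T, Y)) (Φ 0) = dist (Φ 0) 0 := dist_comm _ _
        rw [this]
        exact mul_le_mul_of_nonneg_left hΦ0 (by positivity)
      calc dist (Φ^[m] (0 : C(Set.Icc (0:ℝ) T, Y))) 0
          = dist ((0 : C(Set.Icc (0:ℝ) T, Y))) (Φ^[m] 0) := dist_comm _ _
        _ ≤ ∑ i ∈ Finset.range m, dist (Φ^[i] 0) (Φ^[i+1] 0) := h1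
        _ ≤ ∑ i ∈ Finset.range m, M ^ i / (i.factorial : ℝ) * G :=
            Finset.sum_le_sum fun i _ => h2 i
        _ = (∑ i ∈ Finset.range m, M ^ i / (i.factorial : ℝ)) * G := by
            rw [Finset.sum_mul]
        _ ≤ Real.exp M * G :=
            mul_le_mul_of_nonneg_right (Real.sum_le_exp_of_nonneg hM0 m) hG0
    have hfixm : ∀ m : ℕ, Φ^[m] φ = φ := fun m => Function.IsFixedPt.iterate hfix m
    have hS : ∀ m : ℕ, dist φ 0 ≤ M ^ m / (m.factorial : ℝ) * dist φ 0 + Real.exp M * G := by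
      intro m
      calc dist φ 0 ≤ dist φ (Φ^[m] 0) + dist (Φ^[m] 0) 0 := dist_triangle _ _ _
        _ ≤ M ^ m / (m.factorial : ℝ) * dist φ 0 + Real.exp M * G := by
            have h3 : dist φ (Φ^[m] 0) = dist (Φ^[m] φ) (Φ^[m] 0) := by rw [hfixm m]
            rw [h3]
            exact add_le_add (hdist C hC0 hC m φ 0) (hsum m)
    have hlim : Filter.Tendsto
        (fun m : ℕ => M ^ m / (m.factorial : ℝ) * dist φ 0 + Real.exp M * G)
        Filter.atTop (nhds (0 * dist φ 0 + Real.exp M * G)) :=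
      (((FloorSemiring.tendsto_pow_div_factorial_atTop (K := ℝ) M).mul_const _).add_const _)
    have hfinal : dist φ 0 ≤ 0 * dist φ 0 + Real.exp M * G := ge_of_tendsto' hlim hS
    rw [zero_mul, zero_add] at hfinal
    intro u
    calc ‖φ u‖ = dist (φ u) ((0 : C(Set.Icc (0:ℝ) T, Y)) u) := by
          rw [ContinuousMap.zero_apply, dist_zero_right]
      _ ≤ dist φ 0 := ContinuousMap.dist_apply_le_dist u
      _ ≤ Real.exp M * G := hfinal


theorem volterra_unique (A : ℝ → X →L[ℂ] Y) (F : Y →L[ℂ] X) (g : ℝ → Y)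
    (hA1 : ∀ x, Continuous fun t => A t x)
    (hA2 : ∀ T : ℝ, ∃ C, 0 ≤ C ∧ ∀ t : ℝ, t ≤ T → ‖A t‖ ≤ C)
    (hg : Continuous g) (u v : ℝ → Y)
    (hu : ContinuousOn u (Set.Ici 0)) (hv : ContinuousOn v (Set.Ici 0))
    (hueq : ∀ t : ℝ, 0 ≤ t → u t = g t + ∫ s in (0:ℝ)..t, A (t - s) (F (u s)))
    (hveq : ∀ t : ℝ, 0 ≤ t → v t = g t + ∫ s in (0:ℝ)..t, A (t - s) (F (v s))) :
    ∀ t : ℝ, 0 ≤ t → u t = v t := by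
  intro t₀ ht₀
  have hT : (0:ℝ) ≤ t₀ := ht₀
  have hrestr : ∀ w : ℝ → Y, ContinuousOn w (Set.Ici 0) →
      Continuous ((Set.Icc (0:ℝ) t₀).restrict w) :=
    fun w hw => (hw.mono (fun s hs => hs.1)).restrict
  have hfix : ∀ (w : ℝ → Y) (hw : ContinuousOn w (Set.Ici 0)),
      (∀ t : ℝ, 0 ≤ t → w t = g t + ∫ s in (0:ℝ)..t, A (t - s) (F (w s))) →
      PhiC A F g t₀ hT hA1 hA2 hg ⟨_, hrestr w hw⟩ = ⟨_, hrestr w hw⟩ := by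
    intro w hw hweq
    ext p
    rw [PhiC_apply]
    have h0p : (0:ℝ) ≤ (p:ℝ) := p.2.1
    have hint : (∫ s in (0:ℝ)..(p:ℝ), A ((p:ℝ) - s)
          (F ((⟨_, hrestr w hw⟩ : C(Set.Icc (0:ℝ) t₀, Y)) (Set.projIcc 0 t₀ hT s))))
        = ∫ s in (0:ℝ)..(p:ℝ), A ((p:ℝ) - s) (F (w s)) := by
      apply intervalIntegral.integral_congr
      intro s hs
      rw [Set.uIcc_of_le h0p] at hs
      have hsmem : s ∈ Set.Icc (0:ℝ) t₀ := ⟨hs.1, hs.2.trans p.2.2⟩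
      simp only [ContinuousMap.coe_mk, Set.restrict_apply, Set.projIcc_of_mem hT hsmem]
      rfl
    rw [hint]
    exact (hweq p h0p).symm
  obtain ⟨φ, hfixφ, huniq, _⟩ := volterra_T A F g hA1 hA2 hg t₀ hT
  have h1 := huniq _ (hfix u hu hueq)
  have h2 := huniq _ (hfix v hv hveq)
  have h3 : (⟨_, hrestr u hu⟩ : C(Set.Icc (0:ℝ) t₀, Y)) = ⟨_, hrestr v hv⟩ := h1.trans h2.symm
  exact ContinuousMap.congr_fun h3 ⟨t₀, ⟨ht₀, le_refl t₀⟩⟩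

theorem volterra_global (A : ℝ → X →L[ℂ] Y) (F : Y →L[ℂ] X) (g : ℝ → Y)
    (hA1 : ∀ x, Continuous fun t => A t x)
    (hA2 : ∀ T : ℝ, ∃ C, 0 ≤ C ∧ ∀ t : ℝ, t ≤ T → ‖A t‖ ≤ C)
    (hg : Continuous g) :
    ∃ φ : ℝ → Y, ContinuousOn φ (Set.Ici 0) ∧
      (∀ t : ℝ, 0 ≤ t → φ t = g t + ∫ s in (0:ℝ)..t, A (t - s) (F (φ s))) ∧
      (∀ T C G : ℝ, 0 ≤ T → (∀ t : ℝ, t ≤ T → ‖A t‖ ≤ C) →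
        (∀ t ∈ Set.Icc (0:ℝ) T, ‖g t‖ ≤ G) →
        ∀ t ∈ Set.Icc (0:ℝ) T, ‖φ t‖ ≤ Real.exp (C * ‖F‖ * T) * G) := by
  classical
  have hex : ∀ T : ℝ, ∃ φ : C(Set.Icc (0:ℝ) (max T 0), Y),
      (PhiC A F g (max T 0) (le_max_right T 0) hA1 hA2 hg φ = φ) ∧
      (∀ ψ, PhiC A F g (max T 0) (le_max_right T 0) hA1 hA2 hg ψ = ψ → ψ = φ) ∧
      (∀ C G : ℝ, (∀ t : ℝ, t ≤ max T 0 → ‖A t‖ ≤ C) →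
        (∀ t ∈ Set.Icc (0:ℝ) (max T 0), ‖g t‖ ≤ G) →
        ∀ u : Set.Icc (0:ℝ) (max T 0), ‖φ u‖ ≤ Real.exp (C * ‖F‖ * (max T 0)) * G) :=
    fun T => volterra_T A F g hA1 hA2 hg (max T 0) (le_max_right T 0)
  choose sol hsolfix hsoluniq hsolbound using hex
  -- consistency (one-sided)
  have hcons1 : ∀ T₁ T₂ : ℝ, max T₁ 0 ≤ max T₂ 0 → ∀ t : ℝ,
      ∀ (h1 : t ∈ Set.Icc (0:ℝ) (max T₁ 0)) (h2 : t ∈ Set.Icc (0:ℝ) (max T₂ 0)),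
      sol T₁ ⟨t, h1⟩ = sol T₂ ⟨t, h2⟩ := by
    intro T₁ T₂ hle t h1 h2
    set M₁ := max T₁ 0
    set M₂ := max T₂ 0
    have hincl : Continuous fun p : Set.Icc (0:ℝ) M₁ => (⟨(p:ℝ), p.2.1, p.2.2.trans hle⟩ :
        Set.Icc (0:ℝ) M₂) := Continuous.subtype_mk continuous_subtype_val _
    set ψ : C(Set.Icc (0:ℝ) M₁, Y) :=
      ⟨fun p => sol T₂ ⟨(p:ℝ), p.2.1, p.2.2.trans hle⟩, (sol T₂).continuous.comp hincl⟩ with hψ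
    have hfixψ : PhiC A F g M₁ (le_max_right T₁ 0) hA1 hA2 hg ψ = ψ := by
      ext p
      rw [PhiC_apply]
      have h0p : (0:ℝ) ≤ (p:ℝ) := p.2.1
      have hmemp : (p:ℝ) ∈ Set.Icc (0:ℝ) M₂ := ⟨p.2.1, p.2.2.trans hle⟩
      have h2fix := ContinuousMap.congr_fun (hsolfix T₂) ⟨(p:ℝ), hmemp⟩
      rw [PhiC_apply] at h2fix
      have hint : (∫ s in (0:ℝ)..(p:ℝ), A ((p:ℝ) - s)
            (F (ψ (Set.projIcc 0 M₁ (le_max_right T₁ 0) s))))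
          = ∫ s in (0:ℝ)..(p:ℝ), A ((p:ℝ) - s)
            (F (sol T₂ (Set.projIcc 0 M₂ (le_max_right T₂ 0) s))) := by
        apply intervalIntegral.integral_congr
        intro s hs
        rw [Set.uIcc_of_le h0p] at hs
        have hs1 : s ∈ Set.Icc (0:ℝ) M₁ := ⟨hs.1, hs.2.trans p.2.2⟩
        have hs2 : s ∈ Set.Icc (0:ℝ) M₂ := ⟨hs.1, hs1.2.trans hle⟩
        have e1 : Set.projIcc 0 M₁ (le_max_right T₁ 0) s = ⟨s, hs1⟩ :=
          Set.projIcc_of_mem _ hs1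
        have e2 : Set.projIcc 0 M₂ (le_max_right T₂ 0) s = ⟨s, hs2⟩ :=
          Set.projIcc_of_mem _ hs2
        simp only [hψ, ContinuousMap.coe_mk, e1, e2]
      rw [hint, h2fix]
      rfl
    have := hsoluniq T₁ ψ hfixψ
    calc sol T₁ ⟨t, h1⟩ = ψ ⟨t, h1⟩ := by rw [← this]
      _ = sol T₂ ⟨t, h2⟩ := rfl
  have hcons : ∀ T₁ T₂ : ℝ, ∀ t : ℝ,
      ∀ (h1 : t ∈ Set.Icc (0:ℝ) (max T₁ 0)) (h2 : t ∈ Set.Icc (0:ℝ) (max T₂ 0)),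
      sol T₁ ⟨t, h1⟩ = sol T₂ ⟨t, h2⟩ := by
    intro T₁ T₂ t h1 h2
    rcases le_total (max T₁ 0) (max T₂ 0) with h | h
    · exact hcons1 T₁ T₂ h t h1 h2
    · exact (hcons1 T₂ T₁ h t h2 h1).symm
  -- the global solution
  set φ : ℝ → Y := fun t => sol t ⟨max t 0, le_max_right t 0, le_refl _⟩ with hφ
  have hφval : ∀ t : ℝ, 0 ≤ t → ∀ T : ℝ, ∀ (h2 : t ∈ Set.Icc (0:ℝ) (max T 0)),
      φ t = sol T ⟨t, h2⟩ := by
    intro t ht T h2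
    have h1 : max t 0 ∈ Set.Icc (0:ℝ) (max t 0) := ⟨le_max_right t 0, le_refl _⟩
    have hmax : max t 0 = t := max_eq_left ht
    rw [hφ]
    simp only
    have h1' : t ∈ Set.Icc (0:ℝ) (max t 0) := ⟨ht, le_max_left t 0⟩
    have : (⟨max t 0, h1⟩ : Set.Icc (0:ℝ) (max t 0)) = ⟨t, h1'⟩ := by
      exact Subtype.ext hmax
    rw [this]
    exact hcons t T t h1' h2
  refine ⟨φ, ?_, ?_, ?_⟩
  · -- continuity on Ici 0
    intro t₀ ht₀
    set T' := t₀ + 1 with hT'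
    have hT'mem : ∀ t ∈ Set.Icc (0:ℝ) T', t ∈ Set.Icc (0:ℝ) (max T' 0) :=
      fun t ht => ⟨ht.1, ht.2.trans (le_max_left _ _)⟩
    set ψ : ℝ → Y := fun t => sol T' (Set.projIcc 0 (max T' 0) (le_max_right T' 0) t) with hψ
    have hψcont : Continuous ψ := (sol T').continuous.comp continuous_projIcc
    have hagree : ∀ t ∈ Set.Icc (0:ℝ) T', φ t = ψ t := by
      intro t ht
      have h2 := hT'mem t ht
      rw [hφval t ht.1 T' h2, hψ]
      simp only
      rw [Set.projIcc_of_mem _ h2]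
    have hev : ∀ᶠ t in nhdsWithin t₀ (Set.Ici 0), φ t = ψ t := by
      have h1 : Set.Iio T' ∈ nhdsWithin t₀ (Set.Ici 0) :=
        nhdsWithin_le_nhds (Iio_mem_nhds (by rw [hT']; linarith))
      filter_upwards [h1, self_mem_nhdsWithin] with t h1t h2t
      exact hagree t ⟨h2t, le_of_lt h1t⟩
    have hat : φ t₀ = ψ t₀ := hagree t₀ ⟨ht₀, by rw [hT']; linarith⟩
    exact (hψcont.continuousAt.continuousWithinAt).congr_of_eventuallyEq hev hat
  · -- the equation
    intro t ht
    have h2 : t ∈ Set.Icc (0:ℝ) (max t 0) := ⟨ht, le_max_left t 0⟩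
    have hfixt := ContinuousMap.congr_fun (hsolfix t) ⟨t, h2⟩
    rw [PhiC_apply] at hfixt
    rw [hφval t ht t h2, ← hfixt]
    congr 1
    apply intervalIntegral.integral_congr
    intro s hs
    rw [Set.uIcc_of_le ht] at hs
    have hs2 : s ∈ Set.Icc (0:ℝ) (max t 0) := ⟨hs.1, hs.2.trans (le_max_left t 0)⟩
    have e : Set.projIcc 0 (max t 0) (le_max_right t 0) s = ⟨s, hs2⟩ :=
      Set.projIcc_of_mem _ hs2
    have e2 := hφval s hs.1 t hs2
    simp only [e, e2]
  · -- the bound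
    intro T C G hT0 hC hG t ht
    have hmax : max T 0 = T := max_eq_left hT0
    have h2 : t ∈ Set.Icc (0:ℝ) (max T 0) := ⟨ht.1, by rw [hmax]; exact ht.2⟩
    have hC' : ∀ t : ℝ, t ≤ max T 0 → ‖A t‖ ≤ C := by rw [hmax]; exact hC
    have hG' : ∀ t ∈ Set.Icc (0:ℝ) (max T 0), ‖g t‖ ≤ G := by rw [hmax]; exact hG
    have hb := hsolbound T C G hC' hG' ⟨t, h2⟩
    rw [hφval t ht.1 T h2]
    exact le_trans hb (le_of_eq (by rw [hmax]))

theorem triangle_swap [CompleteSpace Y] (k : ℝ × ℝ → Y) (hk : Continuous k)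
    (t : ℝ) (ht : (0:ℝ) ≤ t) :
    ∫ s in (0:ℝ)..t, (∫ u in s..t, k (u, s)) = ∫ s in (0:ℝ)..t, (∫ r in (0:ℝ)..s, k (s, r)) := by
  set M : Set (ℝ × ℝ) := {p : ℝ × ℝ | p.2 ≤ p.1} with hM
  have hMmeas : MeasurableSet M := measurableSet_le measurable_snd measurable_fst
  set K : ℝ × ℝ → Y := M.indicator k with hK
  set μ : Measure ℝ := volume.restrict (Set.Ioc 0 t) with hμ
  have hKint : Integrable (Function.uncurry fun u s => K (u, s)) (μ.prod μ) := by
    have h1 : (Function.uncurry fun u s => K (u, s)) = K := rfl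
    rw [h1, hμ, Measure.prod_restrict, ← Measure.volume_eq_prod]
    have h2 : IntegrableOn k (Set.Ioc (0:ℝ) t ×ˢ Set.Ioc (0:ℝ) t) volume := by
      apply (hk.continuousOn.integrableOn_compact (isCompact_Icc.prod isCompact_Icc)).mono_set
      exact Set.prod_mono Set.Ioc_subset_Icc_self Set.Ioc_subset_Icc_self
    exact h2.indicator hMmeas
  have hswap := integral_integral_swap hKint
  -- inner integrals
  have hinner1 : ∀ u ∈ Set.Ioc (0:ℝ) t, (∫ s, K (u, s) ∂μ) = ∫ r in (0:ℝ)..u, k (u, r) := by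
    intro u hu
    have h1 : (fun s => K (u, s)) = (Set.Iic u).indicator (fun s => k (u, s)) := by
      funext s
      rw [hK]
      by_cases hsu : s ≤ u
      · rw [Set.indicator_of_mem (by exact hsu : s ∈ Set.Iic u),
          Set.indicator_of_mem (by exact hsu : (u, s) ∈ M)]
      · rw [Set.indicator_of_notMem (by exact hsu : ¬ s ∈ Set.Iic u),
          Set.indicator_of_notMem (by exact hsu : ¬ (u, s) ∈ M)]
    rw [h1, hμ, integral_indicator measurableSet_Iic, Measure.restrict_restrict measurableSet_Iic]
    have h2 : Set.Iic u ∩ Set.Ioc 0 t = Set.Ioc 0 u := by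
      ext s; simp only [Set.mem_inter_iff, Set.mem_Iic, Set.mem_Ioc]
      constructor
      · rintro ⟨h1', h2', _⟩; exact ⟨h2', h1'⟩
      · rintro ⟨h1', h2'⟩; exact ⟨h2', h1', h2'.trans hu.2⟩
    rw [h2, intervalIntegral.integral_of_le hu.1.le]
  have hinner2 : ∀ s ∈ Set.Ioc (0:ℝ) t, (∫ u, K (u, s) ∂μ) = ∫ u in s..t, k (u, s) := by
    intro s hs
    have h1 : (fun u => K (u, s)) = (Set.Ici s).indicator (fun u => k (u, s)) := by
      funext u
      rw [hK]
      by_cases hsu : s ≤ u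
      · rw [Set.indicator_of_mem (by exact hsu : u ∈ Set.Ici s),
          Set.indicator_of_mem (by exact hsu : (u, s) ∈ M)]
      · rw [Set.indicator_of_notMem (by exact hsu : ¬ u ∈ Set.Ici s),
          Set.indicator_of_notMem (by exact hsu : ¬ (u, s) ∈ M)]
    rw [h1, hμ, integral_indicator measurableSet_Ici, Measure.restrict_restrict measurableSet_Ici]
    have h2 : Set.Ici s ∩ Set.Ioc 0 t = Set.Icc s t := by
      ext u; simp only [Set.mem_inter_iff, Set.mem_Ici, Set.mem_Ioc, Set.mem_Icc]
      constructor
      · rintro ⟨h1', _, h3'⟩; exact ⟨h1', h3'⟩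
      · rintro ⟨h1', h2'⟩; exact ⟨h1', hs.1.trans_le h1', h2'⟩
    rw [h2, integral_Icc_eq_integral_Ioc, intervalIntegral.integral_of_le hs.2]
  calc ∫ s in (0:ℝ)..t, (∫ u in s..t, k (u, s))
      = ∫ s in Set.Ioc (0:ℝ) t, (∫ u in s..t, k (u, s)) := intervalIntegral.integral_of_le ht
    _ = ∫ s, (∫ u, K (u, s) ∂μ) ∂μ := by
        apply setIntegral_congr_fun measurableSet_Ioc
        intro s hs
        exact (hinner2 s hs).symm
    _ = ∫ u, (∫ s, K (u, s) ∂μ) ∂μ := hswap.symm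
    _ = ∫ u in Set.Ioc (0:ℝ) t, (∫ r in (0:ℝ)..u, k (u, r)) := by
        apply setIntegral_congr_fun measurableSet_Ioc
        intro u hu
        exact hinner1 u hu
    _ = ∫ s in (0:ℝ)..t, (∫ r in (0:ℝ)..s, k (s, r)) :=
        (intervalIntegral.integral_of_le ht).symm


theorem conv_comm (A B : ℝ → X →L[ℂ] Y) (F : Y →L[ℂ] X)
    (hA1 : ∀ x, Continuous fun t => A t x)
    (hA2 : ∀ T : ℝ, ∃ C, 0 ≤ C ∧ ∀ t : ℝ, t ≤ T → ‖A t‖ ≤ C)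
    (hB1 : ∀ x, Continuous fun t => B t x)
    (hB2 : ∀ T : ℝ, ∃ C, 0 ≤ C ∧ ∀ t : ℝ, t ≤ T → ‖B t‖ ≤ C)
    (hsol : ∀ τ : ℝ, 0 ≤ τ → ∀ x' : X,
      B τ x' = A τ x' + ∫ r in (0:ℝ)..τ, A (τ - r) (F (B r x'))) (x : X) :
    ∀ t : ℝ, 0 ≤ t →
      (∫ s in (0:ℝ)..t, A (t - s) (F (B s x))) = ∫ s in (0:ℝ)..t, B (t - s) (F (A s x)) := by
  set P : ℝ → Y := fun τ => ∫ s in (0:ℝ)..τ, A (τ - s) (F (B s x)) with hP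
  set Q : ℝ → Y := fun τ => ∫ s in (0:ℝ)..τ, B (τ - s) (F (A s x)) with hQ
  have hPcont : Continuous P := conv_cont A hA1 hA2 (F.continuous.comp (hB1 x))
  have hQcont : Continuous Q := conv_cont B hB1 hB2 (F.continuous.comp (hA1 x))
  have hDeq : ∀ t : ℝ, 0 ≤ t →
      P t - Q t = (fun _ : ℝ => (0:Y)) t
        + ∫ s in (0:ℝ)..t, A (t - s) (F (P s - Q s)) := by
    intro t ht
    -- step 1 : expand P
    have hint0 : Continuous fun s : ℝ => A (t - s) (F (A s x)) :=
      sCont A hA1 hA2 (F.continuous.comp (hA1 x)) t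
    have hintP : Continuous fun s : ℝ => A (t - s) (F (P s)) :=
      sCont A hA1 hA2 (F.continuous.comp hPcont) t
    have hintQ : Continuous fun s : ℝ => A (t - s) (F (Q s)) :=
      sCont A hA1 hA2 (F.continuous.comp hQcont) t
    have step1 : P t = (∫ s in (0:ℝ)..t, A (t - s) (F (A s x)))
        + ∫ s in (0:ℝ)..t, A (t - s) (F (P s)) := by
      have e1 : Set.EqOn (fun s : ℝ => A (t - s) (F (B s x)))
          (fun s : ℝ => A (t - s) (F (A s x)) + A (t - s) (F (P s))) (Set.uIcc 0 t) := by
        intro s hs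
        rw [Set.uIcc_of_le ht] at hs
        simp only
        rw [hsol s hs.1 x, map_add, map_add]
      calc P t = ∫ s in (0:ℝ)..t, (A (t - s) (F (A s x)) + A (t - s) (F (P s))) :=
            intervalIntegral.integral_congr e1
        _ = _ := intervalIntegral.integral_add (hint0.intervalIntegrable _ _)
            (hintP.intervalIntegrable _ _)
    -- step 2 : expand Q
    set W : ℝ → Y := fun s => ∫ r in (0:ℝ)..(t - s), A (t - s - r) (F (B r (F (A s x)))) with hW
    have hWcont : Continuous W := by
      apply intervalIntegral.continuous_parametric_intervalIntegral_of_continuous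
        (f := fun (s : ℝ) (r : ℝ) => A (t - s - r) (F (B r (F (A s x))))) (μ := volume)
        ?_ (continuous_const.sub continuous_id)
      exact joint_cont' A hA1 hA2
        (by fun_prop : Continuous fun p : ℝ × ℝ => t - p.1 - p.2)
        (F.continuous.comp (joint_cont' B hB1 hB2 continuous_snd
          (F.continuous.comp (joint_cont' A hA1 hA2 continuous_fst continuous_const))))
    have step2 : Q t = (∫ s in (0:ℝ)..t, A (t - s) (F (A s x)))
        + ∫ s in (0:ℝ)..t, W s := by
      have e2 : Set.EqOn (fun s : ℝ => B (t - s) (F (A s x)))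
          (fun s : ℝ => A (t - s) (F (A s x)) + W s) (Set.uIcc 0 t) := by
        intro s hs
        rw [Set.uIcc_of_le ht] at hs
        simp only
        rw [hsol (t - s) (by linarith [hs.2]) (F (A s x)), hW]
      calc Q t = ∫ s in (0:ℝ)..t, (A (t - s) (F (A s x)) + W s) :=
            intervalIntegral.integral_congr e2
        _ = _ := intervalIntegral.integral_add (hint0.intervalIntegrable _ _)
            (hWcont.intervalIntegrable _ _)
    -- step 3 : transform the double integral
    set k : ℝ × ℝ → Y := fun p => A (t - p.1) (F (B (p.1 - p.2) (F (A p.2 x)))) with hk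
    have hkcont : Continuous k := by
      apply joint_cont' A hA1 hA2 (by fun_prop : Continuous fun p : ℝ × ℝ => t - p.1)
      exact F.continuous.comp (joint_cont' B hB1 hB2
        (by fun_prop : Continuous fun p : ℝ × ℝ => p.1 - p.2)
        (F.continuous.comp (joint_cont' A hA1 hA2 continuous_snd continuous_const)))
    have step3 : (∫ s in (0:ℝ)..t, W s) = ∫ s in (0:ℝ)..t, A (t - s) (F (Q s)) := by
      have ea : Set.EqOn W (fun s : ℝ => ∫ u in s..t, k (u, s)) (Set.uIcc 0 t) := by
        intro s hs
        rw [Set.uIcc_of_le ht] at hs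
        simp only [hW]
        have ha : (fun r : ℝ => A (t - s - r) (F (B r (F (A s x)))))
            = fun r : ℝ => k (r + s, s) := by
          funext r
          rw [hk]
          simp only
          rw [show t - (r + s) = t - s - r by ring, show r + s - s = r by ring]
        rw [ha, intervalIntegral.integral_comp_add_right (fun u => k (u, s)) s, zero_add,
          sub_add_cancel]
      have eb : (∫ s in (0:ℝ)..t, W s) = ∫ s in (0:ℝ)..t, (∫ u in s..t, k (u, s)) :=
        intervalIntegral.integral_congr ea
      rw [eb, triangle_swap k hkcont t ht]
      apply intervalIntegral.integral_congr
      intro s hs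
      rw [Set.uIcc_of_le ht] at hs
      simp only
      have hintB : IntervalIntegrable (fun r : ℝ => B (s - r) (F (A r x))) volume 0 s :=
        (sCont B hB1 hB2 (F.continuous.comp (hA1 x)) s).intervalIntegrable _ _
      have hcomm := ContinuousLinearMap.intervalIntegral_comp_comm
        ((A (t - s)).comp F) hintB
      calc (∫ r in (0:ℝ)..s, k (s, r))
          = ∫ r in (0:ℝ)..s, ((A (t - s)).comp F) (B (s - r) (F (A r x))) := by
            apply intervalIntegral.integral_congr
            intro r _
            rw [hk]
            simp
        _ = ((A (t - s)).comp F) (∫ r in (0:ℝ)..s, B (s - r) (F (A r x))) := hcomm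
        _ = A (t - s) (F (Q s)) := by rw [hQ]; simp
    -- conclude
    rw [step1, step2, step3, zero_add]
    have hsub : (∫ s in (0:ℝ)..t, A (t - s) (F (P s)))
        - (∫ s in (0:ℝ)..t, A (t - s) (F (Q s)))
        = ∫ s in (0:ℝ)..t, A (t - s) (F (P s - Q s)) := by
      rw [← intervalIntegral.integral_sub (hintP.intervalIntegrable _ _)
        (hintQ.intervalIntegrable _ _)]
      apply intervalIntegral.integral_congr
      intro s _
      simp [map_sub]
    rw [← hsub]
    abel
  have hzero := volterra_unique A F (fun _ => (0:Y)) hA1 hA2 continuous_const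
    (fun τ => P τ - Q τ) (fun _ => (0:Y)) ((hPcont.sub hQcont).continuousOn)
    continuousOn_const hDeq
    (by intro τ hτ; simp)
  intro t ht
  have := hzero t ht
  have : P t - Q t = 0 := this
  have := sub_eq_zero.mp this
  exact this

theorem ext_cont (χ : ℝ → X →L[ℂ] Y) (h : DysonGood χ) :
    ∀ x, Continuous fun t => χ (max t 0) x := by
  intro x
  exact (h.1 x).comp_continuous (continuous_id.max continuous_const)
    (fun t => le_max_right t 0)

theorem ext_bdd (χ : ℝ → X →L[ℂ] Y) (h : DysonGood χ) :
    ∀ T : ℝ, ∃ C, 0 ≤ C ∧ ∀ t : ℝ, t ≤ T → ‖χ (max t 0)‖ ≤ C := by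
  intro T
  obtain ⟨C, hC⟩ := h.2 (max T 0)
  refine ⟨max C 0, le_max_right C 0, fun t ht => ?_⟩
  refine le_trans (hC _ ⟨le_max_right t 0, max_le_max ht (le_refl 0)⟩) (le_max_left C 0)

theorem ext_sol [CompleteSpace Y] (F : Y →L[ℂ] X) (χ0 χF : ℝ → X →L[ℂ] Y)
    (hsol : DysonSol F χ0 χF) :
    ∀ τ : ℝ, 0 ≤ τ → ∀ x : X, χF (max τ 0) x = χ0 (max τ 0) x
      + ∫ r in (0:ℝ)..τ, χ0 (max (τ - r) 0) (F (χF (max r 0) x)) := by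
  intro τ hτ x
  rw [max_eq_left hτ]
  rw [hsol τ hτ x]
  congr 1
  apply intervalIntegral.integral_congr
  intro r hr
  rw [Set.uIcc_of_le hτ] at hr
  simp only
  rw [max_eq_left (by linarith [hr.2] : (0:ℝ) ≤ τ - r), max_eq_left hr.1]

theorem dysonFlip [CompleteSpace Y] (F : Y →L[ℂ] X) (χ0 χF : ℝ → X →L[ℂ] Y)
    (h0 : DysonGood χ0) (hF : DysonGood χF) (hsol : DysonSol F χ0 χF) :
    DysonSol (-F) χF χ0 := by
  intro t ht x
  set A : ℝ → X →L[ℂ] Y := fun τ => χ0 (max τ 0) with hA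
  set B : ℝ → X →L[ℂ] Y := fun τ => χF (max τ 0) with hB
  have hcomm := conv_comm A B F (ext_cont χ0 h0) (ext_bdd χ0 h0) (ext_cont χF hF)
    (ext_bdd χF hF) (ext_sol F χ0 χF hsol) x t ht
  have e1 : (∫ s in (0:ℝ)..t, χF (t - s) ((-F) (χ0 s x)))
      = - ∫ s in (0:ℝ)..t, B (t - s) (F (A s x)) := by
    rw [← intervalIntegral.integral_neg]
    apply intervalIntegral.integral_congr
    intro s hs
    rw [Set.uIcc_of_le ht] at hs
    simp only [ContinuousLinearMap.neg_apply, hA, hB]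
    rw [max_eq_left (by linarith [hs.2] : (0:ℝ) ≤ t - s), max_eq_left hs.1, map_neg]
  have e2 : (∫ s in (0:ℝ)..t, A (t - s) (F (B s x)))
      = ∫ s in (0:ℝ)..t, χ0 (t - s) (F (χF s x)) := by
    apply intervalIntegral.integral_congr
    intro s hs
    rw [Set.uIcc_of_le ht] at hs
    simp only [hA, hB]
    rw [max_eq_left (by linarith [hs.2] : (0:ℝ) ≤ t - s), max_eq_left hs.1]
  have e3 := hsol t ht x
  rw [e1, ← hcomm, e2]
  rw [e3]
  abel

theorem dysonUnique [CompleteSpace Y] (F : Y →L[ℂ] X) (χ0 χF χF' : ℝ → X →L[ℂ] Y)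
    (h0 : DysonGood χ0) (hF : DysonGood χF) (hF' : DysonGood χF')
    (hs : DysonSol F χ0 χF) (hs' : DysonSol F χ0 χF') :
    ∀ t : ℝ, 0 ≤ t → χF t = χF' t := by
  intro t ht
  apply ContinuousLinearMap.ext
  intro x
  have h1 := volterra_unique (fun τ => χ0 (max τ 0)) F (fun τ => χ0 (max τ 0) x)
    (ext_cont χ0 h0) (ext_bdd χ0 h0) (ext_cont χ0 h0 x)
    (fun τ => χF (max τ 0) x) (fun τ => χF' (max τ 0) x)
    ((ext_cont χF hF x).continuousOn) ((ext_cont χF' hF' x).continuousOn)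
    (fun τ hτ => ext_sol F χ0 χF hs τ hτ x)
    (fun τ hτ => ext_sol F χ0 χF' hs' τ hτ x) t ht
  simpa [max_eq_left ht] using h1

theorem dysonExists [CompleteSpace Y] (F : Y →L[ℂ] X) (χ0 : ℝ → X →L[ℂ] Y)
    (h0 : DysonGood χ0) : ∃ χF, DysonGood χF ∧ DysonSol F χ0 χF := by
  classical
  set A : ℝ → X →L[ℂ] Y := fun τ => χ0 (max τ 0) with hA
  have hA1 : ∀ x, Continuous fun t => A t x := ext_cont χ0 h0
  have hA2 : ∀ T : ℝ, ∃ C, 0 ≤ C ∧ ∀ t : ℝ, t ≤ T → ‖A t‖ ≤ C := ext_bdd χ0 h0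
  choose CA hCA0 hCA using ext_bdd χ0 h0
  have hxex := fun x : X => volterra_global A F (fun t => A t x) hA1 hA2 (hA1 x)
  choose φ hφc hφe hφb using hxex
  -- globally continuous representative
  set ψ : X → ℝ → Y := fun x τ => φ x (max τ 0) with hψ
  have hψcont : ∀ x, Continuous (ψ x) := fun x =>
    (hφc x).comp_continuous (continuous_id.max continuous_const) (fun τ => le_max_right τ 0)
  have hψval : ∀ x, ∀ t : ℝ, 0 ≤ t → ψ x t = φ x t := by
    intro x t ht
    rw [hψ]
    simp only
    rw [max_eq_left ht]
  have hψe : ∀ x, ∀ t : ℝ, 0 ≤ t →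
      ψ x t = A t x + ∫ s in (0:ℝ)..t, A (t - s) (F (ψ x s)) := by
    intro x t ht
    rw [hψval x t ht, hφe x t ht]
    congr 1
    apply intervalIntegral.integral_congr
    intro s hs
    rw [Set.uIcc_of_le ht] at hs
    simp only
    rw [hψval x s hs.1]
  have hψb : ∀ T : ℝ, 0 ≤ T → ∀ x : X, ∀ t ∈ Set.Icc (0:ℝ) T,
      ‖ψ x t‖ ≤ Real.exp (CA T * ‖F‖ * T) * (CA T * ‖x‖) := by
    intro T hT x t htm
    rw [hψval x t htm.1]
    apply hφb x T (CA T) (CA T * ‖x‖) hT (hCA T) ?_ t htm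
    intro τ hτm
    calc ‖A τ x‖ ≤ ‖A τ‖ * ‖x‖ := (A τ).le_opNorm x
      _ ≤ CA T * ‖x‖ := mul_le_mul_of_nonneg_right (hCA T τ hτm.2) (norm_nonneg x)
  -- linearity
  have hadd : ∀ x y : X, ∀ t : ℝ, 0 ≤ t → ψ (x + y) t = ψ x t + ψ y t := by
    intro x y t ht
    refine volterra_unique A F (fun τ => A τ (x + y)) hA1 hA2 (hA1 (x + y))
      (ψ (x + y)) (fun τ => ψ x τ + ψ y τ) (hψcont _).continuousOn
      ((hψcont x).add (hψcont y)).continuousOn (hψe (x + y)) ?_ t ht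
    intro τ hτ
    have hsplit : (∫ s in (0:ℝ)..τ, A (τ - s) (F (ψ x s + ψ y s)))
        = (∫ s in (0:ℝ)..τ, A (τ - s) (F (ψ x s)))
          + ∫ s in (0:ℝ)..τ, A (τ - s) (F (ψ y s)) := by
      rw [← intervalIntegral.integral_add
        ((sCont A hA1 hA2 (w := fun s => F (ψ x s))
          (F.continuous.comp (hψcont x)) τ).intervalIntegrable _ _)
        ((sCont A hA1 hA2 (w := fun s => F (ψ y s))
          (F.continuous.comp (hψcont y)) τ).intervalIntegrable _ _)]
      apply intervalIntegral.integral_congr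
      intro s _
      simp [map_add]
    rw [hsplit]
    show ψ x τ + ψ y τ = A τ (x + y) + _
    rw [map_add, hψe x τ hτ, hψe y τ hτ]
    abel
  have hsmul : ∀ (c : ℂ) (x : X), ∀ t : ℝ, 0 ≤ t → ψ (c • x) t = c • ψ x t := by
    intro c x t ht
    refine volterra_unique A F (fun τ => A τ (c • x)) hA1 hA2 (hA1 (c • x))
      (ψ (c • x)) (fun τ => c • ψ x τ) (hψcont _).continuousOn
      ((hψcont x).const_smul c).continuousOn (hψe (c • x)) ?_ t ht
    intro τ hτ
    have hsplit : (∫ s in (0:ℝ)..τ, A (τ - s) (F (c • ψ x s)))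
        = c • ∫ s in (0:ℝ)..τ, A (τ - s) (F (ψ x s)) := by
      rw [← intervalIntegral.integral_smul]
      apply intervalIntegral.integral_congr
      intro s _
      simp [_root_.map_smul]
    rw [hsplit]
    show c • ψ x τ = A τ (c • x) + _
    rw [_root_.map_smul, hψe x τ hτ, smul_add]
  -- the operator family
  set χF : ℝ → X →L[ℂ] Y := fun t =>
    if ht : 0 ≤ t then
      LinearMap.mkContinuous
        { toFun := fun x => ψ x t,
          map_add' := fun x y => hadd x y t ht,
          map_smul' := fun c x => hsmul c x t ht }
        (Real.exp (CA t * ‖F‖ * t) * CA t)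
        (fun x => by
          have := hψb t ht x t ⟨ht, le_refl t⟩
          calc ‖ψ x t‖ ≤ Real.exp (CA t * ‖F‖ * t) * (CA t * ‖x‖) := this
            _ = Real.exp (CA t * ‖F‖ * t) * CA t * ‖x‖ := by ring)
    else 0 with hχF
  have happ : ∀ t : ℝ, 0 ≤ t → ∀ x : X, χF t x = ψ x t := by
    intro t ht x
    rw [hχF]
    simp only [dif_pos ht]
    rfl
  refine ⟨χF, ⟨?_, ?_⟩, ?_⟩
  · intro x
    exact ((hψcont x).continuousOn).congr (fun t ht => happ t ht x)
  · intro T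
    refine ⟨Real.exp (CA (max T 0) * ‖F‖ * (max T 0)) * CA (max T 0), ?_⟩
    intro t htm
    apply ContinuousLinearMap.opNorm_le_bound _ (mul_nonneg (Real.exp_pos _).le (hCA0 _))
    intro x
    rw [happ t htm.1 x]
    have htm' : t ∈ Set.Icc (0:ℝ) (max T 0) := ⟨htm.1, htm.2.trans (le_max_left T 0)⟩
    calc ‖ψ x t‖ ≤ Real.exp (CA (max T 0) * ‖F‖ * (max T 0)) * (CA (max T 0) * ‖x‖) :=
          hψb (max T 0) (le_max_right T 0) x t htm'
      _ = Real.exp (CA (max T 0) * ‖F‖ * (max T 0)) * CA (max T 0) * ‖x‖ := by ring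
  · intro t ht x
    rw [happ t ht x, hψe x t ht]
    have hAt : A t x = χ0 t x := by rw [hA]; simp only; rw [max_eq_left ht]
    rw [hAt]
    congr 1
    apply intervalIntegral.integral_congr
    intro s hs
    rw [Set.uIcc_of_le ht] at hs
    simp only
    have e1 : A (t - s) = χ0 (t - s) := by
      rw [hA]
      simp only
      rw [max_eq_left (by linarith [hs.2] : (0:ℝ) ≤ t - s)]
    have e2 : χF s x = ψ x s := happ s hs.1 x
    rw [e1, ← e2]

end FixedPoint

/-- The solution map `𝒮_F : χ0 ↦ χF` of the Dyson equation is a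
bijection on the space of strongly continuous, uniformly-bounded-on-compacts
`𝓑(X,Y)`-valued functions on `ℝ₊`: for every datum there is a unique solution in this
space (unique as a function on `ℝ₊`), and the inverse is the solution map `𝒮_{-F}`,
i.e. `χF = 𝒮_F χ0 ↔ χ0 = 𝒮_{-F} χF`. -/
theorem stmt13 {X Y : Type*} [NormedAddCommGroup X] [NormedSpace ℂ X]
    [NormedAddCommGroup Y] [NormedSpace ℂ Y] [CompleteSpace Y]
    (F : Y →L[ℂ] X) :
    (∀ χ0 : ℝ → X →L[ℂ] Y, DysonGood χ0 →
      (∃ χF, DysonGood χF ∧ DysonSol F χ0 χF) ∧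
        ∀ χF χF', DysonGood χF → DysonGood χF' →
          DysonSol F χ0 χF → DysonSol F χ0 χF' → ∀ t : ℝ, 0 ≤ t → χF t = χF' t) ∧
    (∀ χ0 χF : ℝ → X →L[ℂ] Y, DysonGood χ0 → DysonGood χF →
      (DysonSol F χ0 χF ↔ DysonSol (-F) χF χ0)) := by
  constructor
  · intro χ0 hχ0
    exact ⟨dysonExists F χ0 hχ0,
      fun χF χF' hF hF' hs hs' => dysonUnique F χ0 χF χF' hχ0 hF hF' hs hs'⟩
  · intro χ0 χF h0 hF
    constructor
    · intro h
      exact dysonFlip F χ0 χF h0 hF h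
    · intro h
      have := dysonFlip (-F) χF χ0 hF h0 h
      rwa [neg_neg] at this
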